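/- Fix integers d ≥ 1 and n ≥ 1. Then Σ_{λ ∈ H_n} dif_d(λ) ≥ Σ_{λ ∈ H_n} mod'_d(λ), where dif_d(λ) counts indices 1 ≤ i < ℓ(λ) with λ_i − λ_{i+1} < d and mod'_d(λ) counts parts of λ not congruent to 1 modulo d+1. -/

import Mathlib

/-- A partition: a nonempty weakly decreasing list of positive integers. -/
def IsPartition (l : List ℕ) : Prop :=
  l ≠ [] ∧ l.Pairwise (· ≥ ·) ∧ ∀ x ∈ l, 0 < x

/-- The perimeter of a partition: largest part plus number of parts minus 1. -/
def perim (l : List ℕ) : ℕ := l.headI + l.length - 1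

/-- Number of repeated parts: indices i with λ_i = λ_{i+1}. -/
def repStat (l : List ℕ) : ℕ :=
  ((List.range (l.length - 1)).filter fun i => l.getD i 0 = l.getD (i + 1) 0).length

/-- Number of even parts. -/
def evenStat (l : List ℕ) : ℕ := l.countP fun x => x % 2 = 0

/-- dif_d(λ): number of indices i with λ_i − λ_{i+1} < d. -/
def difStat (d : ℕ) (l : List ℕ) : ℕ :=
  ((List.range (l.length - 1)).filter fun i => l.getD i 0 - l.getD (i + 1) 0 < d).length

/-- mod′_d(λ): number of parts not congruent to 1 mod d+1. -/
def modStat (d : ℕ) (l : List ℕ) : ℕ := l.countP fun x => ¬ x % (d + 1) = 1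

namespace TDGM

def T1 (l : List ℕ) : List ℕ := (l.headI + 1) :: l.tail
def T2 (l : List ℕ) : List ℕ := l.headI :: l

def Hf : ℕ → Finset (List ℕ)
  | 0 => ∅
  | 1 => {[1]}
  | (n+2) => ((Hf (n+1)).image T1) ∪ ((Hf (n+1)).image T2)

lemma perim_cons (h : ℕ) (t : List ℕ) : perim (h :: t) = h + t.length := by
  simp [perim]

lemma mem_Hf : ∀ n, 1 ≤ n → ∀ l : List ℕ, (l ∈ Hf n ↔ IsPartition l ∧ perim l = n) := by
  intro n
  induction n with
  | zero => omega
  | succ n ih =>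
    intro _ l
    match n, l with
    | 0, l =>
      constructor
      · intro hl
        simp [Hf] at hl
        subst hl
        refine ⟨⟨by simp, by simp, by simp⟩, by simp [perim]⟩
      · rintro ⟨⟨hne, hs, hpos⟩, hp⟩
        match l with
        | [a] =>
          have : a = 1 := by simpa [perim] using hp
          simp [Hf, this]
        | a :: b :: t =>
          exfalso
          have hb : 0 < b := hpos b (by simp)
          have := perim_cons a (b :: t)
          have ha : 0 < a := hpos a (by simp)
          simp [this] at hp
          omega
    | (m+1), l =>
      have ihm := ih (by omega)
      constructor
      · intro hl
        simp only [Hf, Finset.mem_union, Finset.mem_image] at hl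
        rcases hl with ⟨x, hx, rfl⟩ | ⟨x, hx, rfl⟩ <;>
          obtain ⟨⟨hne, hs, hpos⟩, hp⟩ := (ihm x).mp hx
        · -- T1
          match x, hne with
          | h :: t, _ =>
            rw [List.pairwise_cons] at hs
            refine ⟨⟨by simp [T1], ?_, ?_⟩, ?_⟩
            · rw [T1]; rw [List.pairwise_cons]
              exact ⟨fun b hb => le_trans (hs.1 b hb) (by simp), hs.2⟩
            · intro y hy
              simp [T1] at hy
              rcases hy with rfl | hy
              · omega
              · exact hpos y (by simp [hy])
            · rw [perim_cons] at hp
              simp [T1, perim_cons]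
              omega
        · -- T2
          match x, hne with
          | h :: t, _ =>
            rw [List.pairwise_cons] at hs
            refine ⟨⟨by simp [T2], ?_, ?_⟩, ?_⟩
            · rw [T2]; rw [List.pairwise_cons]
              refine ⟨?_, by rw [List.pairwise_cons]; exact hs⟩
              intro b hb
              simp at hb
              rcases hb with rfl | hb
              · simp
              · exact hs.1 b hb
            · intro z hz
              simp only [T2, List.mem_cons] at hz
              rcases hz with rfl | rfl | hz
              · exact hpos _ (by simp)
              · exact hpos _ (by simp)
              · exact hpos z (by simp [hz])
            · rw [perim_cons] at hp
              simp [T2, perim_cons]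
              omega
      · rintro ⟨⟨hne, hs, hpos⟩, hp⟩
        simp only [Hf, Finset.mem_union, Finset.mem_image]
        match l with
        | [a] =>
          left
          have ha : a = m + 2 := by simpa [perim] using hp
          refine ⟨[a-1], ?_, ?_⟩
          · rw [ihm]
            refine ⟨⟨by simp, by simp, ?_⟩, ?_⟩
            · intro x hx; simp at hx; omega
            · simp [perim]; omega
          · simp [T1]; omega
        | a :: b :: t =>
          rw [List.pairwise_cons] at hs
          have hab : b ≤ a := hs.1 b (by simp)
          have hb : 0 < b := hpos b (by simp)
          rw [perim_cons] at hp
          simp only [List.length_cons] at hp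
          rcases eq_or_lt_of_le hab with rfl | hlt
          · right
            refine ⟨b :: t, ?_, by simp [T2]⟩
            rw [ihm]
            exact ⟨⟨by simp, hs.2, fun x hx => hpos x (by simp [hx])⟩,
              by rw [perim_cons]; omega⟩
          · left
            refine ⟨(a-1) :: b :: t, ?_, ?_⟩
            · rw [ihm]
              refine ⟨⟨by simp, ?_, ?_⟩, ?_⟩
              · rw [List.pairwise_cons]
                refine ⟨?_, hs.2⟩
                intro x hx
                simp at hx
                rcases hx with rfl | hx
                · omega
                · have h1 := (List.pairwise_cons.mp hs.2).1 x hx; omega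
              · intro x hx
                simp at hx
                rcases hx with rfl | rfl | hx
                · omega
                · omega
                · exact hpos x (by simp [hx])
              · rw [perim_cons]; simp; omega
            · simp [T1]; omega

end TDGM

namespace TDGM

lemma difStat_single (d a : ℕ) : difStat d [a] = 0 := by simp [difStat]

lemma difStat_cons2 (d a b : ℕ) (t : List ℕ) :
    difStat d (a::b::t) = (if a - b < d then 1 else 0) + difStat d (b::t) := by
  simp only [difStat, List.length_cons, Nat.add_sub_cancel, List.range_succ_eq_map,
    List.filter_cons, List.filter_map, List.getD_cons_succ, List.getD_cons_zero,
    List.length_cons, List.length_map, Function.comp_def]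
  by_cases h : a - b < d <;> simp [h, Nat.add_comm]

lemma modStat_cons (d a : ℕ) (t : List ℕ) :
    modStat d (a::t) = modStat d t + (if a % (d+1) = 1 then 0 else 1) := by
  simp only [modStat, List.countP_cons]
  by_cases h : a % (d+1) = 1 <;> simp [h]

lemma succ_mod_iff (d h : ℕ) (hd : 1 ≤ d) : (h+1) % (d+1) = 1 ↔ h % (d+1) = 0 := by
  have hq : 1 % (d+1) = 1 := Nat.mod_eq_of_lt (by omega)
  rw [Nat.add_mod, hq]
  have hr : h % (d+1) < d + 1 := Nat.mod_lt _ (by omega)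
  rcases Nat.lt_or_ge (h % (d+1) + 1) (d+1) with hlt | hge
  · rw [Nat.mod_eq_of_lt hlt]; omega
  · have he : h % (d+1) + 1 = d + 1 := by omega
    rw [he, Nat.mod_self]; omega

lemma key_mod (d : ℕ) (hd : 1 ≤ d) (h : ℕ) (t : List ℕ) :
    modStat d (T1 (h::t)) + modStat d (T2 (h::t)) +
      (if (h::t).headI % (d+1) = 0 then 1 else 0)
      = 2 * modStat d (h::t) + 1 := by
  have hiff := succ_mod_iff d h hd
  simp only [T1, T2, List.headI_cons, List.tail_cons, modStat_cons]
  by_cases h0 : h % (d+1) = 0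
  · have h1 : (h+1) % (d+1) = 1 := hiff.mpr h0
    by_cases h2 : h % (d+1) = 1 <;> simp [h0, h1, h2] <;> ring
  · have h1 : ¬ (h+1) % (d+1) = 1 := fun hc => h0 (hiff.mp hc)
    by_cases h2 : h % (d+1) = 1 <;> simp [h0, h1, h2] <;> ring

lemma key_dif (d : ℕ) (hd : 1 ≤ d) (h : ℕ) (t : List ℕ) (hht : ∀ x ∈ t, h ≥ x) :
    difStat d (T1 (h::t)) + difStat d (T2 (h::t)) +
      (if ((h::t).tail ≠ [] ∧ (h::t).headI - (h::t).tail.headI = d - 1) then 1 else 0)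
      = 2 * difStat d (h::t) + 1 := by
  match t with
  | [] =>
    have h1 : h - h < d := by omega
    simp only [T1, T2, List.headI_cons, List.tail_cons, difStat_single, difStat_cons2]
    simp [h1]
    omega
  | b :: t' =>
    have hb : b ≤ h := hht b (by simp)
    simp only [T1, T2, List.headI_cons, List.tail_cons, difStat_cons2, ne_eq,
      reduceCtorEq, not_false_iff, true_and]
    split_ifs <;> omega

lemma T1_injOn (n : ℕ) (hn : 1 ≤ n) :
    ∀ x ∈ Hf n, ∀ y ∈ Hf n, T1 x = T1 y → x = y := by
  intro x hx y hy hxy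
  obtain ⟨⟨hnex, _, _⟩, _⟩ := (mem_Hf n hn x).mp hx
  obtain ⟨⟨hney, _, _⟩, _⟩ := (mem_Hf n hn y).mp hy
  obtain ⟨a, s, rfl⟩ := List.exists_cons_of_ne_nil hnex
  obtain ⟨b, w, rfl⟩ := List.exists_cons_of_ne_nil hney
  simp only [T1, List.headI_cons, List.tail_cons, List.cons.injEq] at hxy
  simp [hxy.1, hxy.2]
  omega

lemma T2_injOn (n : ℕ) :
    ∀ x ∈ Hf n, ∀ y ∈ Hf n, T2 x = T2 y → x = y := by
  intro x _ y _ hxy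
  simpa [T2] using congrArg List.tail hxy

lemma disj_images (n : ℕ) (hn : 1 ≤ n) :
    Disjoint ((Hf n).image T1) ((Hf n).image T2) := by
  rw [Finset.disjoint_left]
  rintro x hx1 hx2
  simp only [Finset.mem_image] at hx1 hx2
  obtain ⟨u, hu, hux⟩ := hx1
  obtain ⟨v, hv, hvx⟩ := hx2
  obtain ⟨⟨hneu, hsu, _⟩, _⟩ := (mem_Hf n hn u).mp hu
  obtain ⟨⟨hnev, _, _⟩, _⟩ := (mem_Hf n hn v).mp hv
  obtain ⟨a, s, rfl⟩ := List.exists_cons_of_ne_nil hneu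
  obtain ⟨c, w, rfl⟩ := List.exists_cons_of_ne_nil hnev
  rw [← hvx] at hux
  simp only [T1, T2, List.headI_cons, List.tail_cons, List.cons.injEq] at hux
  rw [List.pairwise_cons] at hsu
  have := hsu.1 c (by rw [hux.2]; simp)
  omega

lemma sum_Hf_succ (n : ℕ) (hn : 1 ≤ n) (f : List ℕ → ℕ) :
    ∑ l ∈ Hf (n+1), f l = ∑ l ∈ Hf n, f (T1 l) + ∑ l ∈ Hf n, f (T2 l) := by
  obtain ⟨m, rfl⟩ : ∃ m, n = m + 1 := ⟨n-1, by omega⟩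
  show ∑ l ∈ (Hf (m+1)).image T1 ∪ (Hf (m+1)).image T2, f l = _
  rw [Finset.sum_union (disj_images (m+1) (by omega)),
    Finset.sum_image (T1_injOn (m+1) (by omega)),
    Finset.sum_image (T2_injOn (m+1))]

end TDGM

namespace TDGM

def jf (d b : ℕ) : ℕ := (d + 1 - b % (d+1)) % (d+1)

lemma jf_le (d b : ℕ) : jf d b ≤ d := by
  have := Nat.mod_lt (d + 1 - b % (d+1)) (show 0 < d + 1 by omega)
  unfold jf; omega

lemma bj_mod (d b : ℕ) : (b + jf d b) % (d+1) = 0 := by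
  unfold jf
  have hb : b % (d+1) < d + 1 := Nat.mod_lt _ (by omega)
  rcases Nat.eq_zero_or_pos (b % (d+1)) with h0 | h0
  · rw [h0, Nat.sub_zero, Nat.mod_self, Nat.add_zero]
    exact h0
  · have hj : (d + 1 - b % (d+1)) % (d+1) = d + 1 - b % (d+1) :=
      Nat.mod_eq_of_lt (by omega)
    rw [hj, Nat.add_mod, hj]
    have he : b % (d+1) + (d + 1 - b % (d+1)) = d + 1 := by omega
    rw [he, Nat.mod_self]

def Phi (d : ℕ) (l : List ℕ) : List ℕ :=
  (l.tail.headI + jf d l.tail.headI) ::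
    (List.replicate (d - jf d l.tail.headI) l.tail.headI ++ l.tail.tail)

lemma B_le_A (d n : ℕ) (hd : 1 ≤ d) (hn : 1 ≤ n) :
    ((Hf n).filter fun l => l.tail ≠ [] ∧ l.headI - l.tail.headI = d-1).card ≤
    ((Hf n).filter fun l => l.headI % (d+1) = 0).card := by
  apply Finset.card_le_card_of_injOn (Phi d)
  · intro l hl
    simp only [Finset.mem_coe, Finset.mem_filter] at hl ⊢
    obtain ⟨hmem, htne, hgap⟩ := hl
    obtain ⟨⟨hne, hs, hpos⟩, hp⟩ := (mem_Hf n hn l).mp hmem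
    obtain ⟨a, t, rfl⟩ := List.exists_cons_of_ne_nil hne
    simp only [List.tail_cons] at htne
    obtain ⟨b, r, rfl⟩ := List.exists_cons_of_ne_nil htne
    simp only [List.headI_cons, List.tail_cons] at hgap ⊢
    rw [List.pairwise_cons] at hs
    have hab : b ≤ a := hs.1 b (by simp)
    have hbr : ∀ x ∈ r, b ≥ x := (List.pairwise_cons.mp hs.2).1
    have hbpos : 0 < b := hpos b (by simp)
    have hj := jf_le d b
    constructor
    · rw [mem_Hf n hn]
      refine ⟨⟨by simp [Phi], ?_, ?_⟩, ?_⟩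
      · simp only [Phi, List.tail_cons, List.headI_cons]
        rw [List.pairwise_cons]
        constructor
        · intro x hx
          rcases List.mem_append.mp hx with hx | hx
          · rw [(List.mem_replicate.mp hx).2]; omega
          · have := hbr x hx; omega
        · rw [List.pairwise_append]
          refine ⟨?_, (List.pairwise_cons.mp hs.2).2, ?_⟩
          · rw [List.pairwise_replicate]; right; exact le_refl b
          · intro x hx y hy
            rw [(List.mem_replicate.mp hx).2]
            exact hbr y hy
      · intro x hx
        simp only [Phi, List.tail_cons, List.headI_cons, List.mem_cons,
          List.mem_append] at hx
        rcases hx with rfl | hx | hx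
        · omega
        · rw [(List.mem_replicate.mp hx).2]; omega
        · exact hpos x (by simp [hx])
      · simp only [Phi, List.tail_cons, List.headI_cons, perim, List.length_cons,
          List.length_append, List.length_replicate]
        rw [perim_cons] at hp
        simp only [List.length_cons] at hp
        omega
    · simp only [Phi, List.tail_cons, List.headI_cons]
      exact bj_mod d b
  · intro l1 hl1 l2 hl2 heq
    simp only [Finset.coe_filter, Set.mem_setOf_eq] at hl1 hl2
    obtain ⟨hmem1, htne1, hgap1⟩ := hl1
    obtain ⟨hmem2, htne2, hgap2⟩ := hl2
    obtain ⟨⟨hne1, hs1, hpos1⟩, hp1⟩ := (mem_Hf n hn l1).mp hmem1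
    obtain ⟨⟨hne2, hs2, hpos2⟩, hp2⟩ := (mem_Hf n hn l2).mp hmem2
    obtain ⟨a1, t1, rfl⟩ := List.exists_cons_of_ne_nil hne1
    simp only [List.tail_cons] at htne1
    obtain ⟨b1, r1, rfl⟩ := List.exists_cons_of_ne_nil htne1
    obtain ⟨a2, t2, rfl⟩ := List.exists_cons_of_ne_nil hne2
    simp only [List.tail_cons] at htne2
    obtain ⟨b2, r2, rfl⟩ := List.exists_cons_of_ne_nil htne2
    simp only [List.headI_cons, List.tail_cons] at hgap1 hgap2
    rw [List.pairwise_cons] at hs1 hs2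
    have hab1 : b1 ≤ a1 := hs1.1 b1 (by simp)
    have hab2 : b2 ≤ a2 := hs2.1 b2 (by simp)
    have hbr1 : ∀ x ∈ r1, b1 ≥ x := (List.pairwise_cons.mp hs1.2).1
    have hbr2 : ∀ x ∈ r2, b2 ≥ x := (List.pairwise_cons.mp hs2.2).1
    simp only [Phi, List.tail_cons, List.headI_cons, List.cons.injEq] at heq
    obtain ⟨E1, E2⟩ := heq
    have hj1 := jf_le d b1
    have hj2 := jf_le d b2
    -- first, b1 = b2
    have hbb : b1 = b2 := by
      by_contra hne
      -- helper: symmetric contradiction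
      rcases Nat.lt_or_ge b1 b2 with hlt | hge
      · -- j2 < j1, so d - j1 < d - j2 and d - j2 > 0
        have hjj : jf d b2 < jf d b1 := by omega
        rcases Nat.eq_zero_or_pos (d - jf d b1) with hz | hz
        · rw [hz, List.replicate_zero, List.nil_append] at E2
          have hmem : b2 ∈ r1 := by
            rw [E2]
            exact List.mem_append.mpr (Or.inl (List.mem_replicate.mpr ⟨by omega, rfl⟩))
          have := hbr1 b2 hmem
          omega
        · have h1 : (List.replicate (d - jf d b1) b1 ++ r1).headI = b1 := by
            obtain ⟨k, hk⟩ : ∃ k, d - jf d b1 = k + 1 := ⟨d - jf d b1 - 1, by omega⟩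
            rw [hk, List.replicate_succ, List.cons_append, List.headI_cons]
          have h2 : (List.replicate (d - jf d b2) b2 ++ r2).headI = b2 := by
            obtain ⟨k, hk⟩ : ∃ k, d - jf d b2 = k + 1 := ⟨d - jf d b2 - 1, by omega⟩
            rw [hk, List.replicate_succ, List.cons_append, List.headI_cons]
          rw [E2, h2] at h1
          omega
      · have hlt : b2 < b1 := by omega
        have hjj : jf d b1 < jf d b2 := by omega
        rcases Nat.eq_zero_or_pos (d - jf d b2) with hz | hz
        · rw [hz, List.replicate_zero, List.nil_append] at E2
          have hmem : b1 ∈ r2 := by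
            rw [← E2]
            exact List.mem_append.mpr (Or.inl (List.mem_replicate.mpr ⟨by omega, rfl⟩))
          have := hbr2 b1 hmem
          omega
        · have h1 : (List.replicate (d - jf d b1) b1 ++ r1).headI = b1 := by
            obtain ⟨k, hk⟩ : ∃ k, d - jf d b1 = k + 1 := ⟨d - jf d b1 - 1, by omega⟩
            rw [hk, List.replicate_succ, List.cons_append, List.headI_cons]
          have h2 : (List.replicate (d - jf d b2) b2 ++ r2).headI = b2 := by
            obtain ⟨k, hk⟩ : ∃ k, d - jf d b2 = k + 1 := ⟨d - jf d b2 - 1, by omega⟩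
            rw [hk, List.replicate_succ, List.cons_append, List.headI_cons]
          rw [E2, h2] at h1
          omega
    subst hbb
    have hrr : r1 = r2 := by
      apply List.append_cancel_left (as := List.replicate (d - jf d b1) b1)
      exact E2
    have haa : a1 = a2 := by omega
    rw [haa, hrr]
end TDGM

namespace TDGM

lemma key_mod' (d : ℕ) (hd : 1 ≤ d) (l : List ℕ) (hl : IsPartition l) :
    modStat d (T1 l) + modStat d (T2 l) +
      (if l.headI % (d+1) = 0 then 1 else 0) = 2 * modStat d l + 1 := by
  obtain ⟨a, t, rfl⟩ := List.exists_cons_of_ne_nil hl.1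
  exact key_mod d hd a t

lemma key_dif' (d : ℕ) (hd : 1 ≤ d) (l : List ℕ) (hl : IsPartition l) :
    difStat d (T1 l) + difStat d (T2 l) +
      (if (l.tail ≠ [] ∧ l.headI - l.tail.headI = d - 1) then 1 else 0)
      = 2 * difStat d l + 1 := by
  obtain ⟨a, t, rfl⟩ := List.exists_cons_of_ne_nil hl.1
  refine key_dif d hd a t ?_
  have := hl.2.1
  rw [List.pairwise_cons] at this
  exact this.1

lemma M_rec (d n : ℕ) (hd : 1 ≤ d) (hn : 1 ≤ n) :
    (∑ l ∈ Hf (n+1), modStat d l) +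
      ((Hf n).filter fun l => l.headI % (d+1) = 0).card
      = 2 * (∑ l ∈ Hf n, modStat d l) + (Hf n).card := by
  rw [sum_Hf_succ n hn, Finset.card_filter, Finset.mul_sum, Finset.card_eq_sum_ones,
    ← Finset.sum_add_distrib, ← Finset.sum_add_distrib, ← Finset.sum_add_distrib]
  apply Finset.sum_congr rfl
  intro l hl
  exact key_mod' d hd l ((mem_Hf n hn l).mp hl).1

lemma D_rec (d n : ℕ) (hd : 1 ≤ d) (hn : 1 ≤ n) :
    (∑ l ∈ Hf (n+1), difStat d l) +
      ((Hf n).filter fun l => l.tail ≠ [] ∧ l.headI - l.tail.headI = d-1).card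
      = 2 * (∑ l ∈ Hf n, difStat d l) + (Hf n).card := by
  rw [sum_Hf_succ n hn, Finset.card_filter, Finset.mul_sum, Finset.card_eq_sum_ones,
    ← Finset.sum_add_distrib, ← Finset.sum_add_distrib, ← Finset.sum_add_distrib]
  apply Finset.sum_congr rfl
  intro l hl
  exact key_dif' d hd l ((mem_Hf n hn l).mp hl).1

lemma M_le_D (d : ℕ) (hd : 1 ≤ d) : ∀ n, 1 ≤ n →
    (∑ l ∈ Hf n, modStat d l) ≤ ∑ l ∈ Hf n, difStat d l := by
  intro n
  induction n with
  | zero => omega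
  | succ n ih =>
    intro _
    rcases Nat.eq_zero_or_pos n with rfl | hn
    · have h1 : (1:ℕ) % (d+1) = 1 := Nat.mod_eq_of_lt (by omega)
      show (∑ l ∈ Hf 1, modStat d l) ≤ ∑ l ∈ Hf 1, difStat d l
      simp [Hf, modStat, difStat, h1]
    · have hM := M_rec d n hd hn
      have hD := D_rec d n hd hn
      have hBA := B_le_A d n hd hn
      have hIH := ih hn
      omega

end TDGM


theorem total_dif_ge_total_mod (d n : ℕ) (hd : 1 ≤ d) (hn : 1 ≤ n) :
    ∑ᶠ l ∈ {l : List ℕ | IsPartition l ∧ perim l = n}, modStat d l ≤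
    ∑ᶠ l ∈ {l : List ℕ | IsPartition l ∧ perim l = n}, difStat d l := by
  have hset : {l : List ℕ | IsPartition l ∧ perim l = n} = ↑(TDGM.Hf n) := by
    ext l
    simp [TDGM.mem_Hf n hn l]
  rw [hset, finsum_mem_coe_finset, finsum_mem_coe_finset]
  exact TDGM.M_le_D d hd n hn
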